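/- arXiv:2104.13063 — 4 statements merged into one kernel-verified Lean document; each statement's English description precedes it below -/
import Mathlib

section
/- Let d ≥ 1 be an integer and let γ_d be the standard Gaussian measure on ℝ^d. Then γ_d({x ∈ ℝ^d : ‖x‖ ≥ r}) ∼ (2π)^{−d/2} · (d·ω_d) · e^{−r²/2} r^{d−2} as r → ∞, i.e. lim_{r→∞} (2π)^{d/2} (d·ω_d)^{−1} e^{r²/2} r^{2−d} γ_d({x : ‖x‖ ≥ r}) = 1. -/
open MeasureTheory Filter

/-- The standard Gaussian measure on `ℝ^d`: density `(2π)^{−d/2} exp(−‖x‖²/2)`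
with respect to Lebesgue measure. -/
noncomputable def stdGaussian (d : ℕ) : Measure (EuclideanSpace ℝ (Fin d)) :=
  volume.withDensity fun x =>
    ENNReal.ofReal ((2 * Real.pi) ^ (-(d : ℝ) / 2) * Real.exp (-‖x‖ ^ 2 / 2))

section auxStmt5
open Set Real Topology


variable (d : ℕ)

noncomputable def phi5 : ℝ → ℝ := fun y => y ^ ((d:ℝ)-1) * Real.exp (-(y^2/2))
noncomputable def T5 : ℝ → ℝ := fun r => ∫ y in Ioi r, phi5 d y
noncomputable def g5 : ℝ → ℝ := fun r => Real.exp (-(r^2/2)) * r ^ ((d:ℝ)-2)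
noncomputable def g5' : ℝ → ℝ := fun r =>
  Real.exp (-(r^2/2)) * (((d:ℝ)-2) * r ^ ((d:ℝ)-3) - r ^ ((d:ℝ)-1))

lemma phi5_integrableOn (hd : 1 ≤ d) : IntegrableOn (phi5 d) (Ioi 0) := by
  have h := integrableOn_rpow_mul_exp_neg_mul_sq (b := 1/2) one_half_pos
    (s := (d:ℝ)-1) (by
      have : (1:ℝ) ≤ d := by exact_mod_cast hd
      linarith)
  refine h.congr_fun (fun y hy => ?_) measurableSet_Ioi
  simp only [phi5]
  ring_nf

lemma phi5_contOn : ContinuousOn (phi5 d) (Ioi 0) := by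
  apply ContinuousOn.mul
  · exact fun y hy => (Real.continuousAt_rpow_const y _ (Or.inl (ne_of_gt hy))).continuousWithinAt
  · exact (Real.continuous_exp.comp (by continuity)).continuousOn

lemma T5_eq (hd : 1 ≤ d) {r : ℝ} (hr : 0 < r) :
    T5 d r = (∫ y in Ioi (0:ℝ), phi5 d y) - ∫ t in (0:ℝ)..r, phi5 d t := by
  rw [intervalIntegral.integral_of_le hr.le]
  have hsplit : (∫ y in Ioi (0:ℝ), phi5 d y)
      = (∫ y in Ioc (0:ℝ) r, phi5 d y) + ∫ y in Ioi r, phi5 d y := by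
    rw [← setIntegral_union (Ioc_disjoint_Ioi le_rfl) measurableSet_Ioi
      ((phi5_integrableOn d hd).mono_set Ioc_subset_Ioi_self)
      ((phi5_integrableOn d hd).mono_set (Ioi_subset_Ioi hr.le)),
      Ioc_union_Ioi_eq_Ioi hr.le]
  simp only [T5]
  linarith [hsplit]

lemma T5_tendsto (hd : 1 ≤ d) : Tendsto (T5 d) atTop (𝓝 0) := by
  have h := intervalIntegral_tendsto_integral_Ioi (0:ℝ) (phi5_integrableOn d hd) tendsto_id
  have h2 : Tendsto (fun r => (∫ y in Ioi (0:ℝ), phi5 d y) - ∫ t in (0:ℝ)..r, phi5 d t)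
      atTop (𝓝 ((∫ y in Ioi (0:ℝ), phi5 d y) - ∫ y in Ioi (0:ℝ), phi5 d y)) :=
    Tendsto.sub tendsto_const_nhds h
  rw [sub_self] at h2
  refine h2.congr' ?_
  filter_upwards [eventually_gt_atTop 0] with r hr
  exact (T5_eq d hd hr).symm

lemma T5_hasDeriv (hd : 1 ≤ d) {r : ℝ} (hr : 0 < r) :
    HasDerivAt (T5 d) (-(phi5 d r)) r := by
  have hint : IntervalIntegrable (phi5 d) volume 0 r := by
    rw [intervalIntegrable_iff]
    exact (phi5_integrableOn d hd).mono_set (by rw [uIoc_of_le hr.le]; exact Ioc_subset_Ioi_self)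
  have hmeas : StronglyMeasurableAtFilter (phi5 d) (𝓝 r) :=
    (phi5_contOn d).stronglyMeasurableAtFilter isOpen_Ioi _ hr
  have hcont : ContinuousAt (phi5 d) r :=
    ((phi5_contOn d).continuousWithinAt (mem_Ioi.2 hr)).continuousAt (isOpen_Ioi.mem_nhds hr)
  have h1 : HasDerivAt (fun u => ∫ t in (0:ℝ)..u, phi5 d t) (phi5 d r) r :=
    intervalIntegral.integral_hasDerivAt_right hint hmeas hcont
  have h2 := h1.const_sub (∫ y in Ioi (0:ℝ), phi5 d y)
  refine h2.congr_of_eventuallyEq ?_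
  filter_upwards [isOpen_Ioi.mem_nhds hr] with x hx
  exact T5_eq d hd hx

lemma g5_hasDeriv {r : ℝ} (hr : 0 < r) : HasDerivAt (g5 d) (g5' d r) r := by
  have h1 : HasDerivAt (fun x : ℝ => Real.exp (-(x^2/2))) (Real.exp (-(r^2/2)) * (-r)) r := by
    have hp : HasDerivAt (fun x : ℝ => -(x^2/2)) (-r) r := by
      have : HasDerivAt (fun x : ℝ => -(x^2/2)) _ r := ((hasDerivAt_pow 2 r).div_const 2).neg
      convert this using 1
      ring
    exact hp.exp
  have h2 : HasDerivAt (fun x : ℝ => x ^ ((d:ℝ)-2))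
      (((d:ℝ)-2) * r ^ ((d:ℝ)-2-1)) r :=
    Real.hasDerivAt_rpow_const (Or.inl hr.ne')
  have : HasDerivAt (g5 d) _ r := h1.mul h2
  convert this using 1
  simp only [g5']
  have hr1 : r ^ ((d:ℝ)-1) = r ^ ((d:ℝ)-2) * r := by
    rw [show (d:ℝ)-1 = (d:ℝ)-2+1 by ring, Real.rpow_add_one hr.ne']
  have hr3 : ((d:ℝ)-2-1) = (d:ℝ)-3 := by ring
  rw [hr3, hr1]
  ring

lemma g5'_factor {r : ℝ} (hr0 : 0 < r) :
    g5' d r = -(phi5 d r) * (1 - ((d:ℝ)-2) / r ^ 2) := by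
  have hfac : r ^ ((d:ℝ)-3) = r ^ ((d:ℝ)-1) / r ^ 2 := by
    rw [← Real.rpow_two, ← Real.rpow_sub hr0]
    congr 1
    ring
  simp only [g5', phi5, hfac]
  have h2 : (r:ℝ) ^ 2 ≠ 0 := pow_ne_zero _ hr0.ne'
  field_simp
  ring

lemma g5'_ne (hd : 1 ≤ d) : ∀ᶠ r in atTop, g5' d r ≠ 0 := by
  filter_upwards [eventually_gt_atTop (max 1 (d:ℝ))] with r hr
  have hr1 : (1:ℝ) < r := lt_of_le_of_lt (le_max_left _ _) hr
  have hrd : (d:ℝ) < r := lt_of_le_of_lt (le_max_right _ _) hr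
  have hr0 : 0 < r := lt_trans one_pos hr1
  have hsq : (d:ℝ) - 2 < r ^ 2 := by nlinarith
  rw [g5'_factor d hr0]
  have hphi : 0 < phi5 d r :=
    mul_pos (Real.rpow_pos_of_pos hr0 _) (Real.exp_pos _)
  have hden : (0:ℝ) < 1 - ((d:ℝ)-2) / r ^ 2 := by
    have : ((d:ℝ)-2) / r ^ 2 < 1 := (div_lt_one (by positivity)).2 hsq
    linarith
  exact mul_ne_zero (neg_ne_zero.2 hphi.ne') hden.ne'

lemma g5_tendsto : Tendsto (g5 d) atTop (𝓝 0) := by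
  have h := tendsto_rpow_mul_exp_neg_mul_atTop_nhds_zero ((d:ℝ)-2) 1 one_pos
  refine squeeze_zero' ?_ ?_ h
  · filter_upwards [eventually_gt_atTop 0] with r hr
    exact mul_nonneg (Real.exp_pos _).le (Real.rpow_nonneg hr.le _)
  · filter_upwards [eventually_ge_atTop 2] with r hr
    have hr0 : (0:ℝ) ≤ r := by linarith
    have hle : Real.exp (-(r^2/2)) ≤ Real.exp (-1*r) := by
      apply Real.exp_le_exp.2
      nlinarith
    calc g5 d r = Real.exp (-(r^2/2)) * r ^ ((d:ℝ)-2) := rfl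
      _ ≤ Real.exp (-1*r) * r ^ ((d:ℝ)-2) :=
        mul_le_mul_of_nonneg_right hle (Real.rpow_nonneg hr0 _)
      _ = r ^ ((d:ℝ)-2) * Real.exp (-1*r) := mul_comm _ _

lemma ratio_tendsto (hd : 1 ≤ d) :
    Tendsto (fun r => -(phi5 d r) / g5' d r) atTop (𝓝 1) := by
  have h0 : Tendsto (fun r : ℝ => ((d:ℝ)-2) / r ^ 2) atTop (𝓝 0) :=
    Tendsto.div_atTop tendsto_const_nhds (tendsto_pow_atTop two_ne_zero)
  have h1 : Tendsto (fun r : ℝ => 1 - ((d:ℝ)-2) / r ^ 2) atTop (𝓝 1) := by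
    have := Tendsto.sub (tendsto_const_nhds : Tendsto (fun _:ℝ => (1:ℝ)) atTop (𝓝 1)) h0
    simpa using this
  have h2 : Tendsto (fun r : ℝ => (1 - ((d:ℝ)-2) / r ^ 2)⁻¹) atTop (𝓝 1) := by
    have := h1.inv₀ (by norm_num)
    simpa using this
  refine h2.congr' ?_
  filter_upwards [eventually_gt_atTop (max 1 (d:ℝ))] with r hr
  have hr1 : (1:ℝ) < r := lt_of_le_of_lt (le_max_left _ _) hr
  have hrd : (d:ℝ) < r := lt_of_le_of_lt (le_max_right _ _) hr
  have hr0 : 0 < r := lt_trans one_pos hr1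
  have hphi : 0 < phi5 d r :=
    mul_pos (Real.rpow_pos_of_pos hr0 _) (Real.exp_pos _)
  rw [g5'_factor d hr0, div_mul_cancel_left₀ (neg_ne_zero.2 hphi.ne')]

lemma T5_div_g5 (hd : 1 ≤ d) : Tendsto (fun r => T5 d r / g5 d r) atTop (𝓝 1) := by
  refine HasDerivAt.lhopital_zero_atTop (f' := fun r => -(phi5 d r)) (g' := g5' d)
    ?_ ?_ (g5'_ne d hd) (T5_tendsto d hd) (g5_tendsto d) (ratio_tendsto d hd)
  · filter_upwards [eventually_gt_atTop 0] with r hr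
    exact T5_hasDeriv d hd hr
  · filter_upwards [eventually_gt_atTop 0] with r hr
    exact g5_hasDeriv d hr

lemma main_aux (hd : 1 ≤ d) :
    Tendsto (fun r : ℝ => Real.exp (r^2/2) * r ^ ((2:ℝ) - d) * T5 d r) atTop (𝓝 1) := by
  refine (T5_div_g5 d hd).congr' ?_
  filter_upwards [eventually_gt_atTop 0] with r hr
  rw [div_eq_mul_inv]
  simp only [g5]
  rw [mul_inv, ← Real.exp_neg, neg_neg, ← Real.rpow_neg hr.le]
  rw [show -((d:ℝ)-2) = (2:ℝ)-d by ring]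
  ring

lemma tail_eq (d : ℕ) (hd : 1 ≤ d) {r : ℝ} (hr : 0 < r) :
    (stdGaussian d {x : EuclideanSpace ℝ (Fin d) | r ≤ ‖x‖}).toReal
      = (2 * Real.pi) ^ (-(d : ℝ) / 2) *
        ((d : ℝ) * (volume (Metric.closedBall (0 : EuclideanSpace ℝ (Fin d)) 1)).toReal) *
        T5 d r := by
  haveI : Nontrivial (EuclideanSpace ℝ (Fin d)) :=
    Module.nontrivial_of_finrank_pos (R := ℝ) (by rw [finrank_euclideanSpace_fin]; omega)
  set S : Set (EuclideanSpace ℝ (Fin d)) := {x | r ≤ ‖x‖} with hS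
  have hSm : MeasurableSet S := measurableSet_le measurable_const measurable_norm
  set c : ℝ := (2 * Real.pi) ^ (-(d : ℝ) / 2) with hc
  -- step 1/2 : toReal of measure = set integral
  have h1 : (stdGaussian d S).toReal = ∫ x in S, c * Real.exp (-‖x‖ ^ 2 / 2) := by
    rw [stdGaussian, withDensity_apply _ hSm]
    rw [integral_eq_lintegral_of_nonneg_ae]
    · filter_upwards with x
      positivity
    · exact ((continuous_const.mul
        (Real.continuous_exp.comp (by continuity))).aestronglyMeasurable).restrict
  rw [h1]
  -- step 3 : as integral of a function of the norm
  have h2 : (∫ x in S, c * Real.exp (-‖x‖ ^ 2 / 2))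
      = ∫ x : EuclideanSpace ℝ (Fin d),
          (Ici r).indicator (fun t => c * Real.exp (-t ^ 2 / 2)) ‖x‖ := by
    rw [← integral_indicator hSm]
    have key : ∀ x : EuclideanSpace ℝ (Fin d),
        S.indicator (fun x => c * Real.exp (-‖x‖ ^ 2 / 2)) x
          = (Ici r).indicator (fun t => c * Real.exp (-t ^ 2 / 2)) ‖x‖ := by
      intro x
      by_cases hx : r ≤ ‖x‖
      · rw [Set.indicator_of_mem (by exact hx), Set.indicator_of_mem (by exact hx)]
      · rw [Set.indicator_of_notMem (by exact hx), Set.indicator_of_notMem (by exact hx)]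
    simp only [key]
  rw [h2]
  -- step 4 : polar-type formula
  rw [integral_fun_norm_addHaar (volume : Measure (EuclideanSpace ℝ (Fin d)))
    ((Ici r).indicator (fun t => c * Real.exp (-t ^ 2 / 2)))]
  rw [finrank_euclideanSpace_fin, Measure.addHaar_closedBall_eq_addHaar_ball]
  rw [nsmul_eq_mul, smul_eq_mul]
  -- step 5 : reduce the 1-d integral
  have h3 : (∫ y in Ioi (0:ℝ),
        y ^ (d - 1) • (Ici r).indicator (fun t => c * Real.exp (-t ^ 2 / 2)) y)
      = c * T5 d r := by
    have e1 : ∀ y : ℝ, y ^ (d - 1) • (Ici r).indicator (fun t => c * Real.exp (-t ^ 2 / 2)) y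
        = (Ici r).indicator (fun t => y ^ (d - 1) * (c * Real.exp (-t ^ 2 / 2))) y := by
      intro y
      by_cases hy : y ∈ Ici r
      · rw [Set.indicator_of_mem hy, Set.indicator_of_mem hy, smul_eq_mul]
      · rw [Set.indicator_of_notMem hy, Set.indicator_of_notMem hy, smul_zero]
    have e1' : ∀ y : ℝ, y ^ (d - 1) • (Ici r).indicator (fun t => c * Real.exp (-t ^ 2 / 2)) y
        = (Ici r).indicator (fun t => t ^ (d - 1) * (c * Real.exp (-t ^ 2 / 2))) y := by
      intro y
      rw [e1 y]
      by_cases hy : y ∈ Ici r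
      · rw [Set.indicator_of_mem hy, Set.indicator_of_mem hy]
      · rw [Set.indicator_of_notMem hy, Set.indicator_of_notMem hy]
    simp only [e1']
    rw [setIntegral_indicator measurableSet_Ici,
      show Ioi (0:ℝ) ∩ Ici r = Ici r from
        inter_eq_self_of_subset_right (fun y hy => lt_of_lt_of_le hr hy),
      MeasureTheory.integral_Ici_eq_integral_Ioi]
    rw [show (T5 d r) = ∫ y in Ioi r, phi5 d y from rfl, ← integral_const_mul]
    refine setIntegral_congr_fun measurableSet_Ioi (fun y hy => ?_)
    have hy0 : 0 < y := lt_trans hr hy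
    simp only [phi5]
    have : (y:ℝ) ^ (d - 1) = y ^ ((d:ℝ) - 1) := by
      rw [← Real.rpow_natCast y (d-1)]
      congr 1
      push_cast [Nat.cast_sub hd]
      ring
    rw [this]
    ring_nf
  rw [h3, Measure.real]
  ring

theorem stmt5_main (d : ℕ) (hd : 1 ≤ d) :
    Tendsto (fun r : ℝ =>
        (2 * Real.pi) ^ ((d : ℝ) / 2) *
          ((d : ℝ) * (volume (Metric.closedBall (0 : EuclideanSpace ℝ (Fin d)) 1)).toReal)⁻¹ *
          Real.exp (r ^ 2 / 2) * r ^ ((2 : ℝ) - (d : ℝ)) *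
          (stdGaussian d {x : EuclideanSpace ℝ (Fin d) | r ≤ ‖x‖}).toReal)
      atTop (nhds 1) := by
  haveI : Nontrivial (EuclideanSpace ℝ (Fin d)) :=
    Module.nontrivial_of_finrank_pos (R := ℝ) (by rw [finrank_euclideanSpace_fin]; omega)
  set ω : ℝ := (volume (Metric.closedBall (0 : EuclideanSpace ℝ (Fin d)) 1)).toReal with hω
  have hωpos : 0 < ω := by
    rw [hω]
    refine ENNReal.toReal_pos ?_ ?_
    · exact (Metric.measure_closedBall_pos volume _ one_pos).ne'
    · exact (measure_closedBall_lt_top).ne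
  have hBne : (d : ℝ) * ω ≠ 0 := by
    have : (0:ℝ) < d := by exact_mod_cast hd
    positivity
  have hAc : (2 * Real.pi) ^ ((d : ℝ) / 2) * (2 * Real.pi) ^ (-(d : ℝ) / 2) = 1 := by
    rw [← Real.rpow_add (by positivity), show (d:ℝ)/2 + -(d:ℝ)/2 = 0 by ring, Real.rpow_zero]
  refine (main_aux d hd).congr' ?_
  filter_upwards [eventually_gt_atTop 0] with r hr
  rw [tail_eq d hd hr]
  have expand : (2 * Real.pi) ^ ((d : ℝ) / 2) * ((d : ℝ) * ω)⁻¹ *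
        Real.exp (r ^ 2 / 2) * r ^ ((2 : ℝ) - (d : ℝ)) *
        ((2 * Real.pi) ^ (-(d : ℝ) / 2) * ((d : ℝ) * ω) * T5 d r)
      = ((2 * Real.pi) ^ ((d : ℝ) / 2) * (2 * Real.pi) ^ (-(d : ℝ) / 2)) *
        (((d : ℝ) * ω)⁻¹ * ((d : ℝ) * ω)) *
        (Real.exp (r ^ 2 / 2) * r ^ ((2 : ℝ) - (d : ℝ)) * T5 d r) := by ring
  rw [expand, hAc, inv_mul_cancel₀ hBne, one_mul, one_mul]

end auxStmt5

/-- Gaussian tail asymptotics in `ℝ^d`: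
`γ_d({‖x‖ ≥ r}) ∼ (2π)^{−d/2}·(d·ω_d)·e^{−r²/2} r^{d−2}` as `r → ∞`,
where `ω_d` is the Lebesgue volume of the unit ball in `ℝ^d`. -/
theorem stmt5 (d : ℕ) (hd : 1 ≤ d) :
    Tendsto (fun r : ℝ =>
        (2 * Real.pi) ^ ((d : ℝ) / 2) *
          ((d : ℝ) * (volume (Metric.closedBall (0 : EuclideanSpace ℝ (Fin d)) 1)).toReal)⁻¹ *
          Real.exp (r ^ 2 / 2) * r ^ ((2 : ℝ) - (d : ℝ)) *
          (stdGaussian d {x : EuclideanSpace ℝ (Fin d) | r ≤ ‖x‖}).toReal)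
      atTop (nhds 1) :=
  stmt5_main d hd
end

section
/- Let d ≥ 1 be an integer, λ < 0 a real number, and δ ∈ (0, √(−2λ)). Let R(t) = δt + a(t) where a : (0,∞) → [0,∞) satisfies a(t) = o(t) as t → ∞. Let α ∈ (0,1) and let s : (0,∞) → [0,∞) satisfy s(t) ≤ αt for all t and s(t) = o(t) as t → ∞; let b : (0,∞) → [0,∞) satisfy b(t) = o(t); and let x : (0,∞) → ℝ^d satisfy ‖x(t)‖ ≤ b(t) for all sufficiently large t. Let h : ℝ^d → (0,∞) be a continuous strictly positive function such that, for some c₁ > 0, h(y) ≥ c₁ e^{−√(−2λ)‖y‖} ‖y‖^{−(d−1)/2} whenever ‖y‖ ≥ 1. Then there exist constants C > 0 and T ≥ 0 such that for all t ≥ T, γ_d({z ∈ ℝ^d : ‖x(t) + √(t − s(t)) · z‖ ≥ R(t)}) ≤ h(x(t)) · e^{−Ct} · e^{−λ(t−s(t)) − √(−2λ) R(t)}. -/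
open MeasureTheory Filter

lemma gauss_integrable {V : Type*} [NormedAddCommGroup V] [InnerProductSpace ℝ V]
    [FiniteDimensional ℝ V] [MeasurableSpace V] [BorelSpace V] {c : ℝ} (hc : 0 < c) :
    Integrable (fun v : V => Real.exp (-c * ‖v‖ ^ 2)) := by
  have h := (GaussianFourier.integrable_cexp_neg_mul_sq_norm_add (V := V)
      (b := (c : ℂ)) (by simpa using hc) 0 0).norm
  convert h using 2 with v
  rw [Complex.norm_exp]
  norm_num
  exact Or.inl (by norm_cast)

lemma gauss_lintegral (d : ℕ) {c : ℝ} (hc : 0 < c) :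
    ∫⁻ z : EuclideanSpace ℝ (Fin d), ENNReal.ofReal (Real.exp (-c * ‖z‖ ^ 2)) =
      ENNReal.ofReal ((Real.pi / c) ^ ((d : ℝ) / 2)) := by
  rw [← MeasureTheory.ofReal_integral_eq_lintegral_ofReal (gauss_integrable hc)
    (ae_of_all _ fun z => (Real.exp_pos _).le)]
  congr 1
  rw [GaussianFourier.integral_rexp_neg_mul_sq_norm (V := EuclideanSpace ℝ (Fin d)) hc]
  norm_num [finrank_euclideanSpace_fin]

lemma stdGaussian_tail (d : ℕ) {θ r : ℝ} (hθ0 : 0 ≤ θ) (hθ : θ < 1/2) (hr : 0 ≤ r)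
    {S : Set (EuclideanSpace ℝ (Fin d))} (hS : MeasurableSet S)
    (hsub : ∀ z ∈ S, r ≤ ‖z‖) :
    stdGaussian d S ≤ ENNReal.ofReal ((2 * Real.pi) ^ (-(d : ℝ) / 2) *
      (Real.pi / (1/2 - θ)) ^ ((d : ℝ) / 2) * Real.exp (-θ * r ^ 2)) := by
  have hc : 0 < 1/2 - θ := by linarith
  have hcst0 : 0 < (2 * Real.pi) ^ (-(d : ℝ) / 2) :=
    Real.rpow_pos_of_pos (by positivity) _
  calc stdGaussian d S
      = ∫⁻ z in S, ENNReal.ofReal ((2 * Real.pi) ^ (-(d : ℝ) / 2) * Real.exp (-‖z‖ ^ 2 / 2)) :=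
        withDensity_apply _ hS
    _ ≤ ∫⁻ z in S, ENNReal.ofReal ((2 * Real.pi) ^ (-(d : ℝ) / 2) * Real.exp (-θ * r ^ 2)) *
          ENNReal.ofReal (Real.exp (-(1/2 - θ) * ‖z‖ ^ 2)) := by
        apply setLIntegral_mono
        · exact (measurable_const.mul (ENNReal.measurable_ofReal.comp
            ((Real.continuous_exp.comp (by continuity)).measurable)))
        · intro z hz
          rw [← ENNReal.ofReal_mul (by positivity)]
          apply ENNReal.ofReal_le_ofReal
          rw [mul_assoc, ← Real.exp_add]
          apply mul_le_mul_of_nonneg_left _ hcst0.le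
          apply Real.exp_le_exp.2
          have h1 : r ≤ ‖z‖ := hsub z hz
          have h2 : r ^ 2 ≤ ‖z‖ ^ 2 := pow_le_pow_left₀ hr h1 2
          have h3 := mul_le_mul_of_nonneg_left h2 hθ0
          linarith
    _ ≤ ∫⁻ z, ENNReal.ofReal ((2 * Real.pi) ^ (-(d : ℝ) / 2) * Real.exp (-θ * r ^ 2)) *
          ENNReal.ofReal (Real.exp (-(1/2 - θ) * ‖z‖ ^ 2)) := setLIntegral_le_lintegral _ _
    _ = ENNReal.ofReal ((2 * Real.pi) ^ (-(d : ℝ) / 2) * Real.exp (-θ * r ^ 2)) *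
          ∫⁻ z, ENNReal.ofReal (Real.exp (-(1/2 - θ) * ‖z‖ ^ 2)) :=
        lintegral_const_mul' _ _ ENNReal.ofReal_ne_top
    _ = ENNReal.ofReal ((2 * Real.pi) ^ (-(d : ℝ) / 2) *
          (Real.pi / (1/2 - θ)) ^ ((d : ℝ) / 2) * Real.exp (-θ * r ^ 2)) := by
        rw [gauss_lintegral d hc, ← ENNReal.ofReal_mul (by positivity)]
        ring_nf

set_option maxHeartbeats 1000000 in
/-- Gaussian form of the Brownian tail estimate
`P_{x(t)}(|B_{t−s(t)}| ≥ R(t)) ≤ h(x(t)) e^{−Ct} e^{−λ(t−s(t)) − √(−2λ)R(t)}`. -/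
theorem stmt6 (d : ℕ) (hd : 1 ≤ d) (lam : ℝ) (hlam : lam < 0)
    (δ : ℝ) (hδ : δ ∈ Set.Ioo 0 (Real.sqrt (-2 * lam)))
    (a : ℝ → ℝ) (ha0 : ∀ t > 0, 0 ≤ a t)
    (haoto : Tendsto (fun t => a t / t) atTop (nhds 0))
    (R : ℝ → ℝ) (hR : ∀ t, R t = δ * t + a t)
    (α : ℝ) (hα : α ∈ Set.Ioo (0 : ℝ) 1)
    (s : ℝ → ℝ) (hs0 : ∀ t > 0, 0 ≤ s t) (hsα : ∀ t > 0, s t ≤ α * t)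
    (hsoto : Tendsto (fun t => s t / t) atTop (nhds 0))
    (b : ℝ → ℝ) (hb0 : ∀ t > 0, 0 ≤ b t)
    (hboto : Tendsto (fun t => b t / t) atTop (nhds 0))
    (x : ℝ → EuclideanSpace ℝ (Fin d)) (hx : ∀ᶠ t in atTop, ‖x t‖ ≤ b t)
    (h : EuclideanSpace ℝ (Fin d) → ℝ) (hcont : Continuous h) (hpos : ∀ y, 0 < h y)
    (c₁ : ℝ) (hc₁ : 0 < c₁)
    (hlb : ∀ y : EuclideanSpace ℝ (Fin d), 1 ≤ ‖y‖ →
      c₁ * Real.exp (-Real.sqrt (-2 * lam) * ‖y‖) * ‖y‖ ^ (-((d : ℝ) - 1) / 2) ≤ h y) :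
    ∃ C > 0, ∃ T ≥ (0 : ℝ), ∀ t ≥ T,
      (stdGaussian d
          {z : EuclideanSpace ℝ (Fin d) | R t ≤ ‖x t + Real.sqrt (t - s t) • z‖}).toReal ≤
        h (x t) * Real.exp (-C * t) *
          Real.exp (-lam * (t - s t) - Real.sqrt (-2 * lam) * R t) := by
  obtain ⟨hδ0, hδμ⟩ := hδ
  obtain ⟨hα0, hα1⟩ := hα
  obtain ⟨μ, hμdef⟩ : ∃ y, y = Real.sqrt (-2 * lam) := ⟨_, rfl⟩
  rw [← hμdef] at hlb hδμ ⊢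
  have hμpos : 0 < μ := lt_of_le_of_lt hδ0.le hδμ
  have hμsq : μ ^ 2 = -2 * lam := by rw [hμdef]; exact Real.sq_sqrt (by linarith)
  obtain ⟨g, hgdef⟩ : ∃ y, y = (μ - δ) ^ 2 / 2 := ⟨_, rfl⟩
  have hμδ : 0 < μ - δ := by linarith
  have hg : 0 < g := by rw [hgdef]; exact div_pos (pow_pos hμδ 2) two_pos
  obtain ⟨η, hηdef'⟩ : ∃ y, y = g / (2 * (δ ^ 2 + g)) := ⟨_, rfl⟩
  have hden : 0 < 2 * (δ ^ 2 + g) := by nlinarith [sq_nonneg δ]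
  have hη : 0 < η := by rw [hηdef']; exact div_pos hg hden
  have hηdef : η * (2 * (δ ^ 2 + g)) = g := by
    rw [hηdef']; field_simp
  have hηδ : η * δ ^ 2 ≤ g / 2 := by linarith only [hηdef, mul_nonneg hη.le hg.le]
  have hηhalf : η < 1/2 := by
    rw [hηdef', div_lt_iff₀ hden]
    linarith only [pow_pos hδ0 2, hg]
  obtain ⟨θ, hθdef⟩ : ∃ y, y = 1/2 - η := ⟨_, rfl⟩
  have hθ0 : 0 ≤ θ := by rw [hθdef]; linarith only [hηhalf]
  have hθhalf : θ < 1/2 := by rw [hθdef]; linarith only [hη]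
  have hkey : g / 2 ≤ μ ^ 2 / 2 - μ * δ + θ * δ ^ 2 := by
    have hgid : μ ^ 2 / 2 - μ * δ + δ ^ 2 / 2 = g := by rw [hgdef]; ring
    rw [hθdef]; linarith only [hgid, hηδ]
  -- minimum of h on the closed unit ball
  obtain ⟨z₀, hz₀mem, hz₀'⟩ :=
    (isCompact_closedBall (0 : EuclideanSpace ℝ (Fin d)) 1).exists_isMinOn
      ⟨0, Metric.mem_closedBall_self zero_le_one⟩ hcont.continuousOn
  have hz₀ : ∀ y ∈ Metric.closedBall (0 : EuclideanSpace ℝ (Fin d)) 1, h z₀ ≤ h y :=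
    fun y hy => isMinOn_iff.mp hz₀' y hy
  have hm : 0 < h z₀ := hpos z₀
  obtain ⟨c₂, hc₂def⟩ : ∃ y, y = min (h z₀) c₁ := ⟨_, rfl⟩
  have hc₂ : 0 < c₂ := by rw [hc₂def]; exact lt_min hm hc₁
  -- Gaussian normalization constant
  obtain ⟨K, hKdef⟩ : ∃ y,
      y = (2 * Real.pi) ^ (-(d : ℝ) / 2) * (Real.pi / (1/2 - θ)) ^ ((d : ℝ) / 2) := ⟨_, rfl⟩
  have hK : 0 < K := by
    rw [hKdef]
    apply mul_pos (Real.rpow_pos_of_pos (by positivity) _)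
    exact Real.rpow_pos_of_pos (div_pos Real.pi_pos (by linarith only [hθhalf])) _
  have hd1 : (1:ℝ) ≤ (d:ℝ) := by exact_mod_cast hd
  obtain ⟨A, hAdef⟩ : ∃ y, y = δ + μ + ((d : ℝ) - 1) / 2 := ⟨_, rfl⟩
  obtain ⟨D, hDdef⟩ : ∃ y, y = |Real.log (K / c₂)| := ⟨_, rfl⟩
  refine ⟨g / 8, by linarith only [hg], ?_⟩
  -- eventual bounds
  have hb_ev : ∀ᶠ t in atTop, b t ≤ δ / 2 * t := by
    have h1 := hboto.eventually_lt_const (show (0:ℝ) < δ / 2 by linarith only [hδ0])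
    filter_upwards [h1, eventually_gt_atTop (0:ℝ)] with t h1 h2
    exact ((div_lt_iff₀ h2).1 h1).le
  have hcomb : ∀ᶠ t in atTop,
      A * (b t / t) + μ ^ 2 / 2 * (s t / t) + μ * (a t / t) + D / t < 3 * g / 8 := by
    have hDt : Tendsto (fun t : ℝ => D / t) atTop (nhds 0) :=
      tendsto_const_nhds.div_atTop tendsto_id
    have hlim := ((hboto.const_mul A).add ((hsoto.const_mul (μ ^ 2 / 2)).add
        ((haoto.const_mul μ).add hDt)))
    have h0 : A * (0:ℝ) + (μ ^ 2 / 2 * 0 + (μ * 0 + 0)) = 0 := by ring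
    rw [h0] at hlim
    have := hlim.eventually_lt_const (show (0:ℝ) < 3 * g / 8 by linarith only [hg])
    filter_upwards [this] with t ht
    linarith only [ht]
  obtain ⟨T, hT⟩ :=
    eventually_atTop.1 (((hx.and hb_ev).and hcomb).and (eventually_ge_atTop (1:ℝ)))
  refine ⟨max T 0, le_max_right _ _, fun t ht => ?_⟩
  obtain ⟨⟨⟨hxb, hbδ⟩, hcmb⟩, ht1⟩ := hT t (le_trans (le_max_left _ _) ht)
  have ht0 : (0:ℝ) < t := by linarith only [ht1]
  have hst := hs0 t ht0
  have hsαt := hsα t ht0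
  have hat := ha0 t ht0
  have hbt := hb0 t ht0
  have hτpos : 0 < t - s t := by
    have hlt : α * t < 1 * t := mul_lt_mul_of_pos_right hα1 ht0
    linarith only [hlt, hsαt]
  have hτle : t - s t ≤ t := by linarith only [hst]
  have hsqτ : 0 < Real.sqrt (t - s t) := Real.sqrt_pos.2 hτpos
  have hRx : δ / 2 * t ≤ R t - ‖x t‖ := by
    rw [hR t]; linarith only [hat, hxb, hbδ]
  have hRx0 : 0 ≤ R t - ‖x t‖ :=
    le_trans (mul_nonneg (by linarith only [hδ0]) ht0.le) hRx
  obtain ⟨r, hrdef⟩ : ∃ y, y = (R t - ‖x t‖) / Real.sqrt (t - s t) := ⟨_, rfl⟩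
  have hr0 : 0 ≤ r := hrdef ▸ div_nonneg hRx0 hsqτ.le
  -- tail bound
  have hS : MeasurableSet {z : EuclideanSpace ℝ (Fin d) | R t ≤ ‖x t + Real.sqrt (t - s t) • z‖} :=
    measurableSet_le measurable_const
      ((continuous_const.add (continuous_id.const_smul (Real.sqrt (t - s t)))).norm).measurable
  have hsub : ∀ z ∈ {z : EuclideanSpace ℝ (Fin d) | R t ≤ ‖x t + Real.sqrt (t - s t) • z‖},
      r ≤ ‖z‖ := by
    intro z hz
    simp only [Set.mem_setOf_eq] at hz
    rw [hrdef, div_le_iff₀ hsqτ]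
    have h1 : ‖x t + Real.sqrt (t - s t) • z‖ ≤ ‖x t‖ + Real.sqrt (t - s t) * ‖z‖ := by
      calc ‖x t + Real.sqrt (t - s t) • z‖
          ≤ ‖x t‖ + ‖Real.sqrt (t - s t) • z‖ := norm_add_le _ _
        _ = ‖x t‖ + Real.sqrt (t - s t) * ‖z‖ := by
            rw [norm_smul, Real.norm_eq_abs, abs_of_nonneg hsqτ.le]
    linarith only [hz, h1]
  have hmeas := stdGaussian_tail d hθ0 hθhalf hr0 hS hsub
  -- the key real-number inequality
  have hnum : K * Real.exp (-θ * r ^ 2) ≤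
      h (x t) * Real.exp (-(g / 8) * t) * Real.exp (-lam * (t - s t) - μ * R t) := by
    obtain ⟨Bt, hBtdef⟩ : ∃ y, y = max 1 (b t) := ⟨_, rfl⟩
    have hBt1 : (1:ℝ) ≤ Bt := hBtdef ▸ le_max_left _ _
    have hBt0 : 0 < Bt := lt_of_lt_of_le one_pos hBt1
    have hlogBt0 : 0 ≤ Real.log Bt := Real.log_nonneg hBt1
    have hlogBtb : Real.log Bt ≤ b t := by
      have h1 := Real.log_le_sub_one_of_pos hBt0
      have h2 : Bt ≤ 1 + b t := by
        rw [hBtdef]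
        exact max_le (by linarith only [hbt]) (by linarith only [hbt])
      linarith only [h1, h2]
    -- lower bound for h (x t)
    have hh : c₂ * Real.exp (-(μ * b t + ((d : ℝ) - 1) / 2 * Real.log Bt)) ≤ h (x t) := by
      rcases le_or_gt 1 ‖x t‖ with hx1 | hx1
      · have hxpos : 0 < ‖x t‖ := lt_of_lt_of_le one_pos hx1
        have hxBt : ‖x t‖ ≤ Bt := hBtdef ▸ le_trans hxb (le_max_right _ _)
        calc c₂ * Real.exp (-(μ * b t + ((d : ℝ) - 1) / 2 * Real.log Bt))
            = c₂ * (Real.exp (-μ * b t) * Real.exp (Real.log Bt * (-((d : ℝ) - 1) / 2))) := by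
              rw [← Real.exp_add]; ring_nf
          _ ≤ c₁ * (Real.exp (-μ * ‖x t‖) * ‖x t‖ ^ (-((d : ℝ) - 1) / 2)) := by
              apply mul_le_mul (by rw [hc₂def]; exact min_le_right _ _) ?_ ?_ hc₁.le
              · apply mul_le_mul
                · refine Real.exp_le_exp.2 ?_
                  have h3 := mul_le_mul_of_nonneg_left hxb hμpos.le
                  linarith only [h3]
                · rw [← Real.rpow_def_of_pos hBt0]
                  exact Real.rpow_le_rpow_of_nonpos hxpos hxBt
                    (by linarith only [hd1])
                · exact (Real.exp_pos _).le
                · exact (Real.exp_pos _).le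
              · positivity
          _ = c₁ * Real.exp (-μ * ‖x t‖) * ‖x t‖ ^ (-((d : ℝ) - 1) / 2) := by ring
          _ ≤ h (x t) := hlb (x t) hx1
      · have hmem : x t ∈ Metric.closedBall (0 : EuclideanSpace ℝ (Fin d)) 1 := by
          simpa [Metric.mem_closedBall, dist_zero_right] using hx1.le
        calc c₂ * Real.exp (-(μ * b t + ((d : ℝ) - 1) / 2 * Real.log Bt))
            ≤ c₂ * 1 := by
              apply mul_le_mul_of_nonneg_left _ hc₂.le
              rw [Real.exp_le_one_iff]
              have h3 : 0 ≤ μ * b t := mul_nonneg hμpos.le hbt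
              have h4 : 0 ≤ ((d : ℝ) - 1) / 2 * Real.log Bt :=
                mul_nonneg (by linarith only [hd1]) hlogBt0
              linarith only [h3, h4]
          _ ≤ h z₀ := by rw [mul_one, hc₂def]; exact min_le_left _ _
          _ ≤ h (x t) := hz₀ (x t) hmem
    have hlam2 : -lam = μ ^ 2 / 2 := by linarith only [hμsq]
    -- bound on r^2
    have hr2 : δ ^ 2 * t - 2 * δ * b t ≤ r ^ 2 := by
      have hsq : Real.sqrt (t - s t) ^ 2 = t - s t := Real.sq_sqrt hτpos.le
      have hrsq : r ^ 2 = (R t - ‖x t‖) ^ 2 / (t - s t) := by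
        rw [hrdef, div_pow, hsq]
      have hδtb : 0 ≤ δ * t - b t := by
        have hhalf : δ / 2 * t ≤ δ * t :=
          mul_le_mul_of_nonneg_right (by linarith only [hδ0]) ht0.le
        linarith only [hhalf, hbδ]
      have h1 : (δ * t - b t) ^ 2 ≤ (R t - ‖x t‖) ^ 2 := by
        apply pow_le_pow_left₀ hδtb _ 2
        rw [hR t]; linarith only [hat, hxb]
      have h2 : (δ * t - b t) ^ 2 / t ≤ (δ * t - b t) ^ 2 / (t - s t) :=
        div_le_div_of_nonneg_left (sq_nonneg _) hτpos hτle
      have h3 : δ ^ 2 * t - 2 * δ * b t ≤ (δ * t - b t) ^ 2 / t := by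
        rw [le_div_iff₀ ht0]
        have hkey3 : (δ * t - b t) ^ 2 - (δ ^ 2 * t - 2 * δ * b t) * t = b t ^ 2 := by ring
        linarith only [sq_nonneg (b t), hkey3]
      calc δ ^ 2 * t - 2 * δ * b t ≤ (δ * t - b t) ^ 2 / t := h3
        _ ≤ (δ * t - b t) ^ 2 / (t - s t) := h2
        _ ≤ (R t - ‖x t‖) ^ 2 / (t - s t) := (div_le_div_iff_of_pos_right hτpos).2 h1
        _ = r ^ 2 := hrsq.symm
    -- linear bookkeeping
    have h5 : A * b t + μ ^ 2 / 2 * s t + μ * a t + D ≤ 3 * g / 8 * t := by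
      have hmul := mul_le_mul_of_nonneg_right hcmb.le ht0.le
      have hne : t ≠ 0 := ne_of_gt ht0
      calc A * b t + μ ^ 2 / 2 * s t + μ * a t + D
          = (A * (b t / t) + μ ^ 2 / 2 * (s t / t) + μ * (a t / t) + D / t) * t := by
            field_simp
          _ ≤ 3 * g / 8 * t := hmul
    have hexp : Real.log (K / c₂) + (-θ * r ^ 2) ≤
        -(μ * b t + ((d : ℝ) - 1) / 2 * Real.log Bt) + (-(g / 8) * t) +
          (-lam * (t - s t) - μ * R t) := by
      rw [hlam2, hR t]
      have hf1 : -(θ * r ^ 2) ≤ -(θ * (δ ^ 2 * t - 2 * δ * b t)) :=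
        neg_le_neg (mul_le_mul_of_nonneg_left hr2 hθ0)
      have hf2 : θ * (2 * δ * b t) ≤ δ * b t := by
        have hδb : 0 ≤ δ * b t := mul_nonneg hδ0.le hbt
        have hp := mul_nonneg (show (0:ℝ) ≤ 1/2 - θ by linarith only [hθhalf]) hδb
        linarith only [hp]
      have hf3 : g / 2 * t ≤ (μ ^ 2 / 2 - μ * δ + θ * δ ^ 2) * t :=
        mul_le_mul_of_nonneg_right hkey ht0.le
      have hf4 : ((d : ℝ) - 1) / 2 * Real.log Bt ≤ ((d : ℝ) - 1) / 2 * b t :=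
        mul_le_mul_of_nonneg_left hlogBtb (by linarith only [hd1])
      have hf6 : Real.log (K / c₂) ≤ D := hDdef ▸ le_abs_self _
      rw [hAdef] at h5
      linarith only [hf1, hf2, hf3, hf4, hf6, h5]
    calc K * Real.exp (-θ * r ^ 2)
        = c₂ * Real.exp (Real.log (K / c₂) + (-θ * r ^ 2)) := by
          rw [Real.exp_add, Real.exp_log (div_pos hK hc₂)]
          field_simp
      _ ≤ c₂ * Real.exp (-(μ * b t + ((d : ℝ) - 1) / 2 * Real.log Bt) + (-(g / 8) * t) +
            (-lam * (t - s t) - μ * R t)) :=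
          mul_le_mul_of_nonneg_left (Real.exp_le_exp.2 hexp) hc₂.le
      _ = (c₂ * Real.exp (-(μ * b t + ((d : ℝ) - 1) / 2 * Real.log Bt))) *
            Real.exp (-(g / 8) * t) * Real.exp (-lam * (t - s t) - μ * R t) := by
          rw [Real.exp_add, Real.exp_add]; ring
      _ ≤ h (x t) * Real.exp (-(g / 8) * t) * Real.exp (-lam * (t - s t) - μ * R t) := by
          apply mul_le_mul_of_nonneg_right _ (Real.exp_pos _).le
          exact mul_le_mul_of_nonneg_right hh (Real.exp_pos _).le
  -- put everything together
  have hrhs0 : 0 ≤ h (x t) * Real.exp (-(g / 8) * t) *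
      Real.exp (-lam * (t - s t) - μ * R t) :=
    mul_nonneg (mul_nonneg (hpos _).le (Real.exp_pos _).le) (Real.exp_pos _).le
  apply ENNReal.toReal_le_of_le_ofReal hrhs0
  refine le_trans hmeas (ENNReal.ofReal_le_ofReal ?_)
  calc (2 * Real.pi) ^ (-(d : ℝ) / 2) * (Real.pi / (1/2 - θ)) ^ ((d : ℝ) / 2) *
        Real.exp (-θ * r ^ 2)
      = K * Real.exp (-θ * r ^ 2) := by rw [hKdef]
    _ ≤ _ := hnum
end

section
/- Let d ≥ 1 be an integer, λ < 0, δ ∈ (0, √(−2λ)), and α ∈ (0, 1 − δ/√(−2λ)). Let c₀ be a real number with max(0, √2·δ/(1−α) − √(−λ))² < c₀ < −λ. Let a, g : (0,∞) → ℝ satisfy a(t) = o(t) and g(t) = o(t) as t → ∞, and let s : (0,∞) → [0,∞) satisfy s(t) ≤ αt for all t. Then there exist constants C > 0 and T > 0 such that for all t ≥ T, e^{g(t)} · e^{c₀(t − s(t)) − √(2c₀)(δt + a(t))} · (δt + a(t))^{(d−1)/2} ≤ e^{−Ct} · e^{−λ(t − s(t)) − √(−2λ)(δt + a(t))}. -/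
open Filter

private lemma stmt9_auxB (B ε t η x : ℝ) (hB : 0 < B) (hε : 0 ≤ ε) (ht : 0 ≤ t)
    (hη : η ≤ ε / (8 * (B + 1))) (hx : x ≤ η * t) : B * x ≤ ε / 8 * t := by
  have hB1 : (0:ℝ) < B + 1 := by linarith
  have h2 : B * x ≤ B * (η * t) := mul_le_mul_of_nonneg_left hx hB.le
  have h3 : η * t ≤ ε / (8 * (B + 1)) * t := mul_le_mul_of_nonneg_right hη ht
  have h4 : B * (η * t) ≤ B * (ε / (8 * (B + 1)) * t) := mul_le_mul_of_nonneg_left h3 hB.le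
  have h5 : B * (ε / (8 * (B + 1)) * t) ≤ ε / 8 * t := by
    have hkey : ε / 8 * t - B * (ε / (8 * (B + 1)) * t) = ε * t / (8 * (B + 1)) := by
      field_simp; ring
    nlinarith [div_nonneg (mul_nonneg hε ht) (by linarith : (0:ℝ) ≤ 8 * (B + 1))]
  linarith

private lemma stmt9_aux1 (K S1 S2 : ℝ) (hK : 0 ≤ K) (h1 : 0 ≤ S1) (h2 : 0 ≤ S2) :
    K * (2 * (S1 * S2)) ≤ 2 * (K + 1) * (S1 + 1) * S2 := by nlinarith

private lemma stmt9_aux2 (x y : ℝ) (hx : 0 ≤ x) (hy : 0 ≤ y) (h : x ^ 2 ≤ y ^ 2) :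
    x ≤ y := by nlinarith

private lemma stmt9_aux3 (M ε st t : ℝ) (hM : 0 ≤ M) (hε : 0 < ε) (h10 : 8 * M / ε ≤ st)
    (hst : st * st = t) : M * st ≤ ε / 8 * t := by
  have hst0 : 0 ≤ st := le_trans (by positivity) h10
  have h14 : M = ε / 8 * (8 * M / ε) := by field_simp
  have h13 : M * st ≤ ε / 8 * st * st := by
    rw [h14]
    have : ε / 8 * (8 * M / ε) * st ≤ ε / 8 * st * st := by
      apply mul_le_mul_of_nonneg_right _ hst0
      exact mul_le_mul_of_nonneg_left h10 (by positivity)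
    linarith [this]
  nlinarith

/-- Elementary exponential domination used for the `K₂` estimate: for
`max(0, √2·δ/(1−α) − √(−λ))² < c₀ < −λ` and `a, g = o(t)`, `0 ≤ s(t) ≤ αt`,
`e^{g(t)} e^{c₀(t−s(t)) − √(2c₀)(δt+a(t))} (δt+a(t))^{(d−1)/2}
  ≤ e^{−Ct} e^{−λ(t−s(t)) − √(−2λ)(δt+a(t))}` for all large `t`. -/
theorem stmt9 (d : ℕ) (hd : 1 ≤ d) (lam : ℝ) (hlam : lam < 0)
    (δ : ℝ) (hδ : δ ∈ Set.Ioo 0 (Real.sqrt (-2 * lam)))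
    (α : ℝ) (hα : α ∈ Set.Ioo (0 : ℝ) (1 - δ / Real.sqrt (-2 * lam)))
    (c₀ : ℝ)
    (hc₀l : (max 0 (Real.sqrt 2 * δ / (1 - α) - Real.sqrt (-lam))) ^ 2 < c₀)
    (hc₀r : c₀ < -lam)
    (a g : ℝ → ℝ)
    (haoto : Tendsto (fun t => a t / t) atTop (nhds 0))
    (hgoto : Tendsto (fun t => g t / t) atTop (nhds 0))
    (s : ℝ → ℝ) (hs0 : ∀ t > 0, 0 ≤ s t) (hsα : ∀ t > 0, s t ≤ α * t) :
    ∃ C > 0, ∃ T > (0 : ℝ), ∀ t ≥ T,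
      Real.exp (g t) * Real.exp (c₀ * (t - s t) - Real.sqrt (2 * c₀) * (δ * t + a t)) *
          (δ * t + a t) ^ (((d : ℝ) - 1) / 2) ≤
        Real.exp (-C * t) *
          Real.exp (-lam * (t - s t) - Real.sqrt (-2 * lam) * (δ * t + a t)) := by
  obtain ⟨hδ0, hδlt⟩ := hδ
  obtain ⟨hα0, hαlt⟩ := hα
  have h2lam : (0:ℝ) < -2 * lam := by linarith
  have hsqpos : 0 < Real.sqrt (-2 * lam) := Real.sqrt_pos.mpr h2lam
  have hα1 : α < 1 := by
    have := div_pos hδ0 hsqpos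
    linarith
  have hc₀0 : 0 < c₀ := lt_of_le_of_lt (sq_nonneg _) hc₀l
  -- notation for square roots
  set sL := Real.sqrt (-lam) with hsL
  set sc := Real.sqrt c₀ with hsc
  have hsL0 : 0 < sL := Real.sqrt_pos.mpr (by linarith)
  have hsc0 : 0 < sc := Real.sqrt_pos.mpr hc₀0
  have hsLsq : sL ^ 2 = -lam := Real.sq_sqrt (by linarith)
  have hscsq : sc ^ 2 = c₀ := Real.sq_sqrt hc₀0.le
  have hsclt : sc < sL := Real.sqrt_lt_sqrt hc₀0.le hc₀r
  have hsplit1 : Real.sqrt (-2 * lam) = Real.sqrt 2 * sL := by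
    rw [show (-2 : ℝ) * lam = 2 * (-lam) by ring, Real.sqrt_mul (by norm_num : (0:ℝ) ≤ 2)]
  have hsplit2 : Real.sqrt (2 * c₀) = Real.sqrt 2 * sc := by
    rw [Real.sqrt_mul (by norm_num : (0:ℝ) ≤ 2)]
  have hs2 : (1:ℝ) < Real.sqrt 2 := by
    have : (1:ℝ) = Real.sqrt 1 := (Real.sqrt_one).symm
    rw [this]
    exact Real.sqrt_lt_sqrt (by norm_num) (by norm_num)
  -- key inequality from hc₀l
  have hmax : max 0 (Real.sqrt 2 * δ / (1 - α) - sL) < sc := by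
    have h1 := Real.sqrt_lt_sqrt (sq_nonneg (max 0 (Real.sqrt 2 * δ / (1 - α) - sL))) hc₀l
    rwa [Real.sqrt_sq (le_max_left _ _)] at h1
  have hkey : Real.sqrt 2 * δ < (1 - α) * (sL + sc) := by
    have h2 : Real.sqrt 2 * δ / (1 - α) - sL < sc :=
      lt_of_le_of_lt (le_max_right _ _) hmax
    have h3 : Real.sqrt 2 * δ / (1 - α) < sL + sc := by linarith
    have h4 : 0 < 1 - α := by linarith
    calc Real.sqrt 2 * δ = (Real.sqrt 2 * δ / (1 - α)) * (1 - α) := by field_simp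
    _ < (sL + sc) * (1 - α) := by
        apply mul_lt_mul_of_pos_right h3 h4
    _ = (1 - α) * (sL + sc) := by ring
  set B : ℝ := Real.sqrt (-2 * lam) - Real.sqrt (2 * c₀) with hBdef
  have hBeq : B = Real.sqrt 2 * (sL - sc) := by rw [hBdef, hsplit1, hsplit2]; ring
  have hB0 : 0 < B := by
    rw [hBeq]
    exact mul_pos (by linarith) (by linarith)
  set ε : ℝ := (1 - α) * (-lam - c₀) - B * δ with hεdef
  have hε0 : 0 < ε := by
    have h5 : ε = (sL - sc) * ((1 - α) * (sL + sc) - Real.sqrt 2 * δ) := by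
      rw [hεdef, hBeq, ← hsLsq, ← hscsq]; ring
    rw [h5]
    exact mul_pos (by linarith) (by linarith)
  set K : ℝ := ((d : ℝ) - 1) / 2 with hKdef
  have hK0 : 0 ≤ K := by
    have : (1:ℝ) ≤ (d:ℝ) := by exact_mod_cast hd
    rw [hKdef]; linarith
  set M : ℝ := 2 * (K + 1) * (Real.sqrt (δ + 1) + 1) with hMdef
  have hM0 : 0 < M := by
    have h6 : 0 ≤ Real.sqrt (δ + 1) := Real.sqrt_nonneg _
    rw [hMdef]; nlinarith
  -- choose η for a
  set η : ℝ := min (min (δ / 2) 1) (ε / (8 * (B + 1))) with hηdef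
  have hη0 : 0 < η := by
    apply lt_min (lt_min (by linarith) one_pos)
    positivity
  -- eventual bounds
  have ha' : ∀ᶠ t in atTop, |a t| / |t| < η := by
    have := (NormedAddCommGroup.tendsto_nhds_zero.mp haoto) η hη0
    simpa [Real.norm_eq_abs, abs_div] using this
  have hg' : ∀ᶠ t in atTop, |g t| / |t| < ε / 8 := by
    have := (NormedAddCommGroup.tendsto_nhds_zero.mp hgoto) (ε / 8) (by linarith)
    simpa [Real.norm_eq_abs, abs_div] using this
  obtain ⟨T₁, hT₁⟩ := eventually_atTop.mp ha'
  obtain ⟨T₂, hT₂⟩ := eventually_atTop.mp hg'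
  refine ⟨ε / 2, by linarith, max (max T₁ T₂) (max 1 ((8 * M / ε) ^ 2 + 1)), ?_, ?_⟩
  · exact lt_of_lt_of_le (by positivity) (le_max_of_le_right (le_max_right _ _))
  intro t ht
  have ht1 : (1:ℝ) ≤ t := le_trans (le_max_of_le_right (le_max_left _ _)) ht
  have ht0 : 0 < t := by linarith
  have htM : (8 * M / ε) ^ 2 ≤ t := by
    have := le_trans (le_max_of_le_right (le_max_right _ _)) ht
    linarith
  have hta : |a t| / |t| < η := hT₁ t (le_trans (le_max_of_le_left (le_max_left _ _)) ht)
  have htg : |g t| / |t| < ε / 8 := hT₂ t (le_trans (le_max_of_le_left (le_max_right _ _)) ht)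
  -- bounds on a t
  have haabs : |a t| < η * t := by
    rw [abs_of_pos ht0] at hta
    calc |a t| = |a t| / t * t := by field_simp
    _ < η * t := by apply mul_lt_mul_of_pos_right hta ht0
  have hηδ : η ≤ δ / 2 := le_trans (min_le_left _ _) (min_le_left _ _)
  have hη1 : η ≤ 1 := le_trans (min_le_left _ _) (min_le_right _ _)
  have hηε : η ≤ ε / (8 * (B + 1)) := min_le_right _ _
  have halow : -(δ / 2 * t) ≤ a t := by
    have h1 : -(η * t) ≤ a t := neg_le_of_abs_le haabs.le
    have : η * t ≤ δ / 2 * t := mul_le_mul_of_nonneg_right hηδ ht0.le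
    linarith
  have hahigh : a t ≤ t := by
    have h1 : a t ≤ η * t := le_of_abs_le haabs.le
    have : η * t ≤ 1 * t := mul_le_mul_of_nonneg_right hη1 ht0.le
    linarith
  set R : ℝ := δ * t + a t with hRdef
  have hR0 : 0 < R := by rw [hRdef]; linarith [halow, mul_pos hδ0 ht0]
  have hRhigh : R ≤ (δ + 1) * t := by rw [hRdef]; linarith [hahigh]
  clear_value sL sc B ε K M η R
  -- the g bound
  have hgle : g t ≤ ε / 8 * t := by
    have h1 : g t ≤ |g t| := le_abs_self _
    have h2 : |g t| < ε / 8 * t := by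
      rw [abs_of_pos ht0] at htg
      calc |g t| = |g t| / t * t := by field_simp
      _ < ε / 8 * t := by apply mul_lt_mul_of_pos_right htg ht0
    linarith
  -- the B * a t bound
  have hBa : B * a t ≤ ε / 8 * t :=
    stmt9_auxB B ε t η (a t) hB0 hε0.le ht0.le hηε (le_of_abs_le haabs.le)
  -- the log bound
  have hlog : K * Real.log R ≤ ε / 8 * t := by
    have hls : Real.log R = 2 * Real.log (Real.sqrt R) := by
      rw [Real.log_sqrt hR0.le]; ring
    have h1 : Real.log (Real.sqrt R) ≤ Real.sqrt R - 1 :=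
      Real.log_le_sub_one_of_pos (Real.sqrt_pos.mpr hR0)
    have h2 : Real.log R ≤ 2 * Real.sqrt R := by rw [hls]; linarith
    have h3 : Real.sqrt R ≤ Real.sqrt (δ + 1) * Real.sqrt t := by
      rw [← Real.sqrt_mul (by linarith : (0:ℝ) ≤ δ + 1)]
      exact Real.sqrt_le_sqrt hRhigh
    have h4 : K * Real.log R ≤ M * Real.sqrt t := by
      have h5 : K * Real.log R ≤ K * (2 * Real.sqrt R) := mul_le_mul_of_nonneg_left h2 hK0
      have h6 : Real.sqrt t ≥ 0 := Real.sqrt_nonneg _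
      have h7 : Real.sqrt (δ + 1) ≥ 0 := Real.sqrt_nonneg _
      have h8 : K * (2 * Real.sqrt R) ≤ K * (2 * (Real.sqrt (δ + 1) * Real.sqrt t)) := by
        apply mul_le_mul_of_nonneg_left _ hK0
        linarith
      have h9 : K * (2 * (Real.sqrt (δ + 1) * Real.sqrt t)) ≤ M * Real.sqrt t := by
        rw [hMdef]; exact stmt9_aux1 K _ _ hK0 h7 h6
      linarith
    have h10 : 8 * M / ε ≤ Real.sqrt t := by
      rw [show t = Real.sqrt t ^ 2 from (Real.sq_sqrt ht0.le).symm] at htM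
      exact stmt9_aux2 _ _ (by positivity) (Real.sqrt_nonneg t) htM
    have h12 : M * Real.sqrt t ≤ ε / 8 * t :=
      stmt9_aux3 M ε (Real.sqrt t) t hM0.le hε0 h10 (Real.mul_self_sqrt ht0.le)
    linarith
  -- the (c₀+λ)(t - s) bound
  have hsle : s t ≤ α * t := hsα t ht0
  have hts : (c₀ + lam) * (t - s t) ≤ (c₀ + lam) * ((1 - α) * t) := by
    apply mul_le_mul_of_nonpos_left _ (by linarith : c₀ + lam ≤ 0)
    linarith
  -- linear consolidation
  have hlin : g t + (c₀ * (t - s t) - Real.sqrt (2 * c₀) * R) + K * Real.log R ≤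
      -(ε / 2) * t + (-lam * (t - s t) - Real.sqrt (-2 * lam) * R) := by
    have hBR : Real.sqrt (-2 * lam) * R - Real.sqrt (2 * c₀) * R = B * (δ * t) + B * a t := by
      rw [hBdef, hRdef]; ring
    have hεt : (c₀ + lam) * ((1 - α) * t) + B * (δ * t) = -ε * t := by
      rw [hεdef]; ring
    linarith only [hgle, hBa, hlog, hts, hBR, hεt, mul_nonneg hε0.le ht0.le]
  -- finish with exponentials
  have hrpow : R ^ K = Real.exp (Real.log R * K) := Real.rpow_def_of_pos hR0 K
  calc Real.exp (g t) * Real.exp (c₀ * (t - s t) - Real.sqrt (2 * c₀) * R) * R ^ K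
      = Real.exp (g t + (c₀ * (t - s t) - Real.sqrt (2 * c₀) * R) + Real.log R * K) := by
        rw [hrpow, ← Real.exp_add, ← Real.exp_add]
    _ ≤ Real.exp (-(ε / 2) * t + (-lam * (t - s t) - Real.sqrt (-2 * lam) * R)) := by
        apply Real.exp_le_exp.mpr
        have : Real.log R * K = K * Real.log R := by ring
        rw [this]
        exact hlin
    _ = Real.exp (-(ε / 2) * t) * Real.exp (-lam * (t - s t) - Real.sqrt (-2 * lam) * R) := by
        rw [← Real.exp_add]
end

section
/- Let d ≥ 1 be an integer, λ < 0, δ ∈ (0, √(−2λ)), and r₁ ∈ ℝ. Let R(t) = δt + a(t) where a : (0,∞) → [0,∞) satisfies a(t) = o(t) as t → ∞, and let s : (0,∞) → [0,∞) satisfy s(t) = o(t) and s(t) < t for all t. Define L(t) = (√(−2λ)·(t − s(t)) − (R(t) + r₁)) / √(2(t − s(t))). Then there exist constants C > 0 and T > 0 such that for all t ≥ T, (R(t) + r₁)^{(d−1)/2} · ∫_{L(t)}^∞ e^{−v²} dv ≤ e^{−Ct}. -/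
open MeasureTheory Filter

lemma gauss_tail_aux (l : ℝ) (hl : 1/2 ≤ l) :
    (∫ v in Set.Ici l, Real.exp (-v ^ 2)) ≤ Real.exp (-l ^ 2) := by
  have hint : IntegrableOn (fun v : ℝ => Real.exp (-v ^ 2)) (Set.Ici l) := by
    have h := integrable_exp_neg_mul_sq (b := (1 : ℝ)) one_pos
    have h' : Integrable (fun v : ℝ => Real.exp (-v ^ 2)) := by simpa using h
    exact h'.integrableOn
  have hexp : IntegrableOn (fun v : ℝ => Real.exp (-v)) (Set.Ici l) := by
    rw [integrableOn_Ici_iff_integrableOn_Ioi]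
    simpa using exp_neg_integrableOn_Ioi l (b := (1 : ℝ)) one_pos
  have hint2 : IntegrableOn (fun v : ℝ => Real.exp (-l ^ 2 + l) * Real.exp (-v))
      (Set.Ici l) := hexp.const_mul _
  have hmono : (∫ v in Set.Ici l, Real.exp (-v ^ 2)) ≤
      ∫ v in Set.Ici l, Real.exp (-l ^ 2 + l) * Real.exp (-v) := by
    refine setIntegral_mono_on hint hint2 measurableSet_Ici fun v hv => ?_
    rw [Set.mem_Ici] at hv
    rw [← Real.exp_add]
    refine Real.exp_le_exp.mpr ?_
    nlinarith [mul_nonneg (sub_nonneg.2 hv) (by linarith : (0:ℝ) ≤ v + l - 1)]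
  have hcalc : (∫ v in Set.Ici l, Real.exp (-l ^ 2 + l) * Real.exp (-v))
      = Real.exp (-l ^ 2) := by
    rw [MeasureTheory.integral_const_mul, MeasureTheory.integral_Ici_eq_integral_Ioi,
      integral_exp_neg_Ioi, ← Real.exp_add]
    ring_nf
  linarith [hmono, hcalc.le, hcalc.ge]

lemma log_le_two_sqrt {x : ℝ} (hx : 0 < x) : Real.log x ≤ 2 * Real.sqrt x := by
  have h1 := Real.log_le_sub_one_of_pos (Real.sqrt_pos.mpr hx)
  have h2 : Real.log (Real.sqrt x) = Real.log x / 2 := Real.log_sqrt hx.le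
  linarith

set_option maxHeartbeats 1000000 in
/-- Bound on the Gaussian-tail factor in `J(t−s(t), R(t)+r₁)`:
`(R(t)+r₁)^{(d−1)/2} ∫_{L(t)}^∞ e^{−v²} dv ≤ e^{−Ct}` for all large `t`, where
`L(t) = (√(−2λ)(t−s(t)) − (R(t)+r₁)) / √(2(t−s(t)))`. -/
theorem stmt10 (d : ℕ) (hd : 1 ≤ d) (lam : ℝ) (hlam : lam < 0)
    (δ : ℝ) (hδ : δ ∈ Set.Ioo 0 (Real.sqrt (-2 * lam))) (r₁ : ℝ)
    (a : ℝ → ℝ) (ha0 : ∀ t > 0, 0 ≤ a t)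
    (haoto : Tendsto (fun t => a t / t) atTop (nhds 0))
    (R : ℝ → ℝ) (hR : ∀ t, R t = δ * t + a t)
    (s : ℝ → ℝ) (hs0 : ∀ t > 0, 0 ≤ s t) (hst : ∀ t > 0, s t < t)
    (hsoto : Tendsto (fun t => s t / t) atTop (nhds 0))
    (L : ℝ → ℝ)
    (hL : ∀ t, L t = (Real.sqrt (-2 * lam) * (t - s t) - (R t + r₁)) /
      Real.sqrt (2 * (t - s t))) :
    ∃ C > 0, ∃ T > (0 : ℝ), ∀ t ≥ T,
      (R t + r₁) ^ (((d : ℝ) - 1) / 2) * ∫ v in Set.Ici (L t), Real.exp (-v ^ 2) ≤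
        Real.exp (-C * t) := by
  obtain ⟨hδ0, hδb⟩ := hδ
  set b := Real.sqrt (-2 * lam) with hbdef
  have hb0 : 0 < b := lt_trans hδ0 hδb
  set ε := b - δ with hεdef
  have hε : 0 < ε := sub_pos.mpr hδb
  set η := ε / (4 * (b + 1)) with hηdef
  have hη : 0 < η := by positivity
  have hη1 : η ≤ 1 := by
    rw [hηdef, div_le_one (by positivity)]; nlinarith
  set p := ((d : ℝ) - 1) / 2 with hpdef
  have hd1 : (1 : ℝ) ≤ (d : ℝ) := by exact_mod_cast hd
  have hp0 : 0 ≤ p := by rw [hpdef]; linarith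
  obtain ⟨T₁, hT₁⟩ := Metric.tendsto_atTop.mp hsoto η hη
  obtain ⟨T₂, hT₂⟩ := Metric.tendsto_atTop.mp haoto η hη
  set K := 32 * p * Real.sqrt (δ + 2) / ε ^ 2 with hKdef
  have hK0 : 0 ≤ K := by positivity
  set Texp : ℝ := 1 + 4 * (|r₁| + 1) / ε + 2 / ε ^ 2 + 2 * (|r₁| + 1) / δ + |r₁| + K ^ 2
    with hTexp
  refine ⟨ε ^ 2 / 16, by positivity, max (max T₁ T₂) Texp,
    lt_of_lt_of_le (by positivity) (le_max_right _ _), fun t ht => ?_⟩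
  have n1 : 0 ≤ 4 * (|r₁| + 1) / ε := by positivity
  have n2 : 0 ≤ 2 / ε ^ 2 := by positivity
  have n3 : 0 ≤ 2 * (|r₁| + 1) / δ := by positivity
  have n4 : 0 ≤ |r₁| := abs_nonneg _
  have n5 : 0 ≤ K ^ 2 := sq_nonneg _
  have htT : Texp ≤ t := le_trans (le_max_right _ _) ht
  rw [hTexp] at htT
  have h1t : 1 ≤ t := by linarith
  have hA : 4 * (|r₁| + 1) / ε ≤ t := by linarith
  have hB : 2 / ε ^ 2 ≤ t := by linarith
  have hCc : 2 * (|r₁| + 1) / δ ≤ t := by linarith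
  have hDd : |r₁| ≤ t := by linarith
  have hE : K ^ 2 ≤ t := by linarith
  have ht0 : 0 < t := by linarith
  have hst' : s t < t := hst t ht0
  have hs0' : 0 ≤ s t := hs0 t ht0
  have ha' : 0 ≤ a t := ha0 t ht0
  have hRt : R t = δ * t + a t := hR t
  -- smallness of s and a
  have hsη : s t ≤ η * t := by
    have h := hT₁ t (le_trans ((le_max_left T₁ T₂).trans (le_max_left _ _)) ht)
    rw [Real.dist_eq, sub_zero] at h
    have h' : s t / t ≤ η := ((le_abs_self _).trans h.le)
    rw [div_le_iff₀ ht0] at h'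
    linarith
  have haη : a t ≤ η * t := by
    have h := hT₂ t (le_trans ((le_max_right T₁ T₂).trans (le_max_left _ _)) ht)
    rw [Real.dist_eq, sub_zero] at h
    have h' : a t / t ≤ η := ((le_abs_self _).trans h.le)
    rw [div_le_iff₀ ht0] at h'
    linarith
  have hηb4 : η * b + η = ε / 4 := by
    rw [hηdef]; field_simp
  have hεt4 : 4 * (|r₁| + 1) ≤ ε * t := by
    rw [div_le_iff₀ hε] at hA; linarith
  have hr1 : r₁ ≤ |r₁| := le_abs_self r₁
  have hr1' : -|r₁| ≤ r₁ := neg_abs_le r₁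
  -- lower bound on the numerator
  have hN : ε / 2 * t ≤ b * (t - s t) - (R t + r₁) := by
    rw [hRt]
    have e1 : b * s t ≤ b * (η * t) := mul_le_mul_of_nonneg_left hsη hb0.le
    have e2 : b * (η * t) + η * t = ε / 4 * t := by rw [hηdef]; field_simp
    have e3 : ε * t = b * t - δ * t := by rw [hεdef]; ring
    linarith [e1, e2, haη, hr1, hεt4, e3]
  have hN0 : 0 ≤ b * (t - s t) - (R t + r₁) := le_trans (by positivity) hN
  -- lower bound on L t
  have hden0 : (0 : ℝ) < Real.sqrt (2 * (t - s t)) :=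
    Real.sqrt_pos.mpr (by linarith)
  have hdenle : Real.sqrt (2 * (t - s t)) ≤ Real.sqrt (2 * t) :=
    Real.sqrt_le_sqrt (by linarith)
  have hL2t0 : (0 : ℝ) < Real.sqrt (2 * t) := Real.sqrt_pos.mpr (by linarith)
  have hLlb : ε / 2 * t / Real.sqrt (2 * t) ≤ L t := by
    rw [hL t]
    calc ε / 2 * t / Real.sqrt (2 * t)
        ≤ (b * (t - s t) - (R t + r₁)) / Real.sqrt (2 * t) :=
          div_le_div_of_nonneg_right hN hL2t0.le
      _ ≤ (b * (t - s t) - (R t + r₁)) / Real.sqrt (2 * (t - s t)) :=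
          div_le_div_of_nonneg_left hN0 hden0 hdenle
  have hLlb0 : (0 : ℝ) ≤ ε / 2 * t / Real.sqrt (2 * t) := by positivity
  have hL0 : 0 ≤ L t := le_trans hLlb0 hLlb
  have hq : (ε / 2 * t / Real.sqrt (2 * t)) ^ 2 = ε ^ 2 / 8 * t := by
    rw [div_pow, Real.sq_sqrt (by linarith : (0:ℝ) ≤ 2 * t)]
    field_simp
    ring
  have hL2 : ε ^ 2 / 8 * t ≤ (L t) ^ 2 := by
    have h := pow_le_pow_left₀ hLlb0 hLlb 2
    rw [hq] at h
    exact h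
  -- L t ≥ 1/2
  have h2ε : 2 ≤ ε ^ 2 * t := by
    rw [div_le_iff₀ (by positivity)] at hB; linarith
  have hLq : (1 : ℝ) / 4 ≤ (L t) ^ 2 := by
    refine le_trans ?_ hL2
    have h := mul_le_mul_of_nonneg_left h2ε (by norm_num : (0:ℝ) ≤ 1/8)
    calc (1:ℝ)/4 = 1/8 * 2 := by norm_num
      _ ≤ 1/8 * (ε ^ 2 * t) := h
      _ = ε ^ 2 / 8 * t := by ring
  have hLhalf : (1 : ℝ) / 2 ≤ L t := by
    have h := Real.sqrt_le_sqrt hLq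
    rw [Real.sqrt_sq hL0] at h
    refine le_trans ?_ h
    rw [show (1:ℝ)/4 = (1/2)^2 by norm_num, Real.sqrt_sq (by norm_num : (0:ℝ) ≤ 1/2)]
  have hI := gauss_tail_aux (L t) hLhalf
  -- positivity and upper bound of R t + r₁
  have hδt : 2 * (|r₁| + 1) ≤ δ * t := by
    rw [div_le_iff₀ hδ0] at hCc; linarith
  have hRpos : 0 < R t + r₁ := by rw [hRt]; linarith [hδt, ha', hr1']
  have hRub : R t + r₁ ≤ (δ + 2) * t := by
    rw [hRt]
    have e4 : η * t ≤ 1 * t := mul_le_mul_of_nonneg_right hη1 ht0.le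
    linarith [haη, e4, hr1, hDd]
  -- log bound
  have hlog : Real.log (R t + r₁) ≤ 2 * (Real.sqrt (δ + 2) * Real.sqrt t) := by
    calc Real.log (R t + r₁) ≤ Real.log ((δ + 2) * t) :=
          Real.log_le_log hRpos hRub
      _ ≤ 2 * Real.sqrt ((δ + 2) * t) := log_le_two_sqrt (by positivity)
      _ = 2 * (Real.sqrt (δ + 2) * Real.sqrt t) := by
          rw [Real.sqrt_mul (by linarith : (0:ℝ) ≤ δ + 2)]
  have hsqt : Real.sqrt t * Real.sqrt t = t := Real.mul_self_sqrt ht0.le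
  have hsqt0 : 0 ≤ Real.sqrt t := Real.sqrt_nonneg t
  have hKsqt : K ≤ Real.sqrt t := (Real.le_sqrt hK0 ht0.le).mpr hE
  have hplog : p * Real.log (R t + r₁) ≤ ε ^ 2 / 16 * t := by
    have step1 : p * Real.log (R t + r₁) ≤ p * (2 * (Real.sqrt (δ + 2) * Real.sqrt t)) :=
      mul_le_mul_of_nonneg_left hlog hp0
    have step2 : p * (2 * (Real.sqrt (δ + 2) * Real.sqrt t))
        = ε ^ 2 / 16 * (K * Real.sqrt t) := by
      rw [hKdef]; field_simp; ring
    have step3 : ε ^ 2 / 16 * (K * Real.sqrt t) ≤ ε ^ 2 / 16 * t := by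
      apply mul_le_mul_of_nonneg_left _ (by positivity)
      calc K * Real.sqrt t ≤ Real.sqrt t * Real.sqrt t :=
            mul_le_mul_of_nonneg_right hKsqt hsqt0
        _ = t := hsqt
    linarith [step1, step2.le, step2.ge]
  -- conclusion
  have hrw : (R t + r₁) ^ p = Real.exp (p * Real.log (R t + r₁)) := by
    rw [Real.rpow_def_of_pos hRpos, mul_comm]
  calc (R t + r₁) ^ p * ∫ v in Set.Ici (L t), Real.exp (-v ^ 2)
      ≤ (R t + r₁) ^ p * Real.exp (-(L t) ^ 2) :=
        mul_le_mul_of_nonneg_left hI (Real.rpow_nonneg hRpos.le p)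
    _ = Real.exp (p * Real.log (R t + r₁) + -(L t) ^ 2) := by
        rw [hrw, ← Real.exp_add]
    _ ≤ Real.exp (-(ε ^ 2 / 16) * t) := Real.exp_le_exp.mpr (by linarith)
end
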